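/- Strong duality for the node relaxation: the infimum of P(β) over β in the primal feasible set C equals the supremum of D(r) over r ∈ ℝⁿ. -/

import Mathlib

open Matrix Finset Classical

noncomputable section
open scoped Classical

/-- The function `h` from the dual of the node relaxation. -/
noncomputable def hfun (lam0 lam2 M x : ℝ) : ℝ :=
  if x ≤ 2 * M * lam2 then x ^ 2 / (4 * lam2) - lam0 else M * x - lam0 - lam2 * M ^ 2

/-- The per-coordinate penalty `ψ_i` of the node relaxation. -/
noncomputable def psi {p : ℕ} (lam0 lam2 M : ℝ) (F0 F1 : Set (Fin p)) (i : Fin p)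
    (t : ℝ) : ℝ :=
  if i ∈ F0 then 0
  else if i ∈ F1 then lam0 + lam2 * t ^ 2
  else if Real.sqrt (lam0 / lam2) ≤ M then
    (if |t| ≤ Real.sqrt (lam0 / lam2) then 2 * Real.sqrt (lam0 * lam2) * |t|
     else lam0 + lam2 * t ^ 2)
  else (lam0 / M + lam2 * M) * |t|

/-- The per-coordinate dual penalty `ν_i`. -/
noncomputable def nufun {p : ℕ} (lam0 lam2 M : ℝ) (F0 F1 : Set (Fin p)) (i : Fin p)
    (x : ℝ) : ℝ :=
  if i ∈ F0 then 0
  else if i ∈ F1 then hfun lam0 lam2 M x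
  else if Real.sqrt (lam0 / lam2) ≤ M then max (hfun lam0 lam2 M x) 0
  else max (M * x - lam0 - lam2 * M ^ 2) 0

/-- The primal feasible set
`C = {β : ‖β‖_∞ ≤ M and β_i = 0 for all i ∈ F0}`. -/
def feasC {p : ℕ} (M : ℝ) (F0 : Set (Fin p)) : Set (Fin p → ℝ) :=
  {β | (∀ i, |β i| ≤ M) ∧ ∀ i ∈ F0, β i = 0}

/-- The primal objective `P(β) = (1/2)‖y − Xβ‖₂² + Σ_i ψ_i(β_i)`. -/
noncomputable def primalP {n p : ℕ} (X : Matrix (Fin n) (Fin p) ℝ) (y : Fin n → ℝ)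
    (lam0 lam2 M : ℝ) (F0 F1 : Set (Fin p)) (β : Fin p → ℝ) : ℝ :=
  (1 / 2) * ∑ j, (y j - ∑ i, X j i * β i) ^ 2 + ∑ i, psi lam0 lam2 M F0 F1 i (β i)

/-- The dual objective `D(r) = −(1/2)‖r‖₂² + ⟨y, r⟩ − Σ_i ν_i(|X_iᵀ r|)`. -/
noncomputable def dualD {n p : ℕ} (X : Matrix (Fin n) (Fin p) ℝ) (y : Fin n → ℝ)
    (lam0 lam2 M : ℝ) (F0 F1 : Set (Fin p)) (r : Fin n → ℝ) : ℝ :=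
  -(1 / 2) * ∑ j, r j ^ 2 + ∑ j, y j * r j
    - ∑ i, nufun lam0 lam2 M F0 F1 i |∑ j, X j i * r j|

lemma sqrt_facts {lam0 lam2 : ℝ} (hlam0 : 0 ≤ lam0) (hlam2 : 0 < lam2) :
    Real.sqrt (lam0 * lam2) = lam2 * Real.sqrt (lam0 / lam2) ∧
      lam2 * Real.sqrt (lam0 / lam2) ^ 2 = lam0 := by
  have htau2 : Real.sqrt (lam0 / lam2) ^ 2 = lam0 / lam2 :=
    Real.sq_sqrt (div_nonneg hlam0 hlam2.le)
  have h2 : lam2 * Real.sqrt (lam0 / lam2) ^ 2 = lam0 := by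
    rw [htau2]; field_simp
  constructor
  · have h3 : lam0 * lam2 = (lam2 * Real.sqrt (lam0 / lam2)) ^ 2 := by
      rw [mul_pow]; nlinarith [h2]
    rw [h3, Real.sqrt_sq (by positivity)]
  · exact h2

lemma hfun_quad_ub {lam0 lam2 M : ℝ} (hlam2 : 0 < lam2) {z u : ℝ}
    (hu : 0 ≤ u) (huM : u ≤ M) :
    z * u - (lam0 + lam2 * u ^ 2) ≤ hfun lam0 lam2 M z := by
  unfold hfun
  split_ifs with h
  · have h4 : (0:ℝ) < 4 * lam2 := by linarith
    have key : z * u - lam2 * u ^ 2 ≤ z ^ 2 / (4 * lam2) := by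
      rw [le_div_iff₀ h4]; nlinarith [sq_nonneg (z - 2 * lam2 * u)]
    linarith
  · push_neg at h
    nlinarith [mul_nonneg (sub_nonneg.2 huM) (by nlinarith : (0:ℝ) ≤ z - lam2 * (u + M))]

-- mid case, linear branch: u ≤ τ, and x arbitrary ≥ 0
lemma hfun_mid_lin_ub {lam0 lam2 M : ℝ} (hlam0 : 0 ≤ lam0) (hlam2 : 0 < lam2)
    {z u tau : ℝ} (htau : tau = Real.sqrt (lam0 / lam2)) (htauM : tau ≤ M)
    (hz : 0 ≤ z) (hu : 0 ≤ u) (hutau : u ≤ tau) :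
    z * u - 2 * Real.sqrt (lam0 * lam2) * u ≤ max (hfun lam0 lam2 M z) 0 := by
  obtain ⟨hc, htau2⟩ := sqrt_facts hlam0 hlam2
  rw [← htau] at hc htau2
  have htau0 : 0 ≤ tau := htau ▸ Real.sqrt_nonneg _
  rcases le_or_gt z (2 * Real.sqrt (lam0 * lam2)) with hz2 | hz2
  · refine le_trans ?_ (le_max_right _ _)
    have : z * u - 2 * Real.sqrt (lam0 * lam2) * u = (z - 2 * Real.sqrt (lam0 * lam2)) * u := by ring
    rw [this]
    exact mul_nonpos_of_nonpos_of_nonneg (by linarith) hu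
  · refine le_trans ?_ (le_max_left _ _)
    have step1 : z * u - 2 * Real.sqrt (lam0 * lam2) * u ≤ z * tau - 2 * lam0 := by
      rw [hc]
      nlinarith [mul_le_mul_of_nonneg_left hutau (by nlinarith : (0:ℝ) ≤ z - 2 * (lam2 * tau))]
    refine le_trans step1 ?_
    unfold hfun
    split_ifs with h
    · have h4 : (0:ℝ) < 4 * lam2 := by linarith
      have key : z * tau - lam0 ≤ z ^ 2 / (4 * lam2) := by
        rw [le_div_iff₀ h4]; nlinarith [sq_nonneg (z - 2 * lam2 * tau)]
      linarith
    · push_neg at h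
      nlinarith [mul_nonneg (sub_nonneg.2 htauM) (by nlinarith : (0:ℝ) ≤ z - lam2 * (M + tau))]

lemma psi_abs {p : ℕ} (lam0 lam2 M : ℝ) (F0 F1 : Set (Fin p)) (i : Fin p) (t : ℝ) :
    psi lam0 lam2 M F0 F1 i t = psi lam0 lam2 M F0 F1 i |t| := by
  simp [psi, abs_abs, sq_abs]

lemma fenchel_ub {p : ℕ} {lam0 lam2 M : ℝ} (hlam0 : 0 ≤ lam0) (hlam2 : 0 < lam2)
    (hM : 0 < M) (F0 F1 : Set (Fin p)) (i : Fin p) (x t : ℝ)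
    (ht : |t| ≤ M) (ht0 : i ∈ F0 → t = 0) :
    x * t - psi lam0 lam2 M F0 F1 i t ≤ nufun lam0 lam2 M F0 F1 i |x| := by
  by_cases hi0 : i ∈ F0
  · simp [psi, nufun, hi0, ht0 hi0]
  have hxt : x * t ≤ |x| * |t| := le_trans (le_abs_self _) (abs_mul x t).le
  rw [psi_abs]
  set z := |x| with hzdef
  set u := |t| with hudef
  have hz : 0 ≤ z := abs_nonneg x
  have hu : 0 ≤ u := abs_nonneg t
  have huM : u ≤ M := ht
  have hgoal : z * u - psi lam0 lam2 M F0 F1 i u ≤ nufun lam0 lam2 M F0 F1 i z := by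
    by_cases hi1 : i ∈ F1
    · simp only [psi, nufun, hi0, hi1, if_false, if_true]
      exact hfun_quad_ub hlam2 hu huM
    · by_cases htauM : Real.sqrt (lam0 / lam2) ≤ M
      · simp only [psi, nufun, hi0, hi1, htauM, if_false, if_true]
        rw [abs_of_nonneg hu]
        split_ifs with hutau
        · exact hfun_mid_lin_ub hlam0 hlam2 rfl htauM hz hu hutau
        · exact le_trans (hfun_quad_ub hlam2 hu huM) (le_max_left _ _)
      · simp only [psi, nufun, hi0, hi1, htauM, if_false]
        rw [abs_of_nonneg hu]
        rcases le_or_gt z (lam0 / M + lam2 * M) with hzle | hzgt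
        · refine le_trans ?_ (le_max_right _ _)
          have : z * u - (lam0 / M + lam2 * M) * u = (z - (lam0 / M + lam2 * M)) * u := by ring
          rw [this]
          exact mul_nonpos_of_nonpos_of_nonneg (by linarith) hu
        · refine le_trans ?_ (le_max_left _ _)
          have hMne : (M:ℝ) ≠ 0 := ne_of_gt hM
          have hdiv : lam0 / M * M = lam0 := div_mul_cancel₀ _ hMne
          nlinarith [mul_nonneg (sub_nonneg.2 huM) (by linarith : (0:ℝ) ≤ z - (lam0 / M + lam2 * M))]
  calc x * t - psi lam0 lam2 M F0 F1 i u ≤ z * u - psi lam0 lam2 M F0 F1 i u := by linarith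
    _ ≤ nufun lam0 lam2 M F0 F1 i z := hgoal

lemma fenchel_attain_nonneg {p : ℕ} {lam0 lam2 M : ℝ} (hlam0 : 0 ≤ lam0) (hlam2 : 0 < lam2)
    (hM : 0 < M) (F0 F1 : Set (Fin p)) (i : Fin p) (z : ℝ) (hz : 0 ≤ z) :
    ∃ u, 0 ≤ u ∧ u ≤ M ∧ (i ∈ F0 → u = 0) ∧
      z * u - psi lam0 lam2 M F0 F1 i u = nufun lam0 lam2 M F0 F1 i z := by
  obtain ⟨hc, htau2⟩ := sqrt_facts hlam0 hlam2
  set tau := Real.sqrt (lam0 / lam2) with htaudef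
  have htau0 : 0 ≤ tau := Real.sqrt_nonneg _
  have hcnn : 0 ≤ Real.sqrt (lam0 * lam2) := Real.sqrt_nonneg _
  by_cases hi0 : i ∈ F0
  · exact ⟨0, le_refl _, hM.le, fun _ => rfl, by simp [psi, nufun, hi0]⟩
  by_cases hi1 : i ∈ F1
  · -- quadratic case
    rcases le_or_gt z (2 * M * lam2) with hz2 | hz2
    · refine ⟨z / (2 * lam2), by positivity, ?_, fun h => absurd h hi0, ?_⟩
      · rw [div_le_iff₀ (by linarith)]; linarith
      · simp only [psi, nufun, hi0, hi1, if_false, if_true, hfun, hz2, if_pos]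
        field_simp
        ring
    · refine ⟨M, hM.le, le_refl _, fun h => absurd h hi0, ?_⟩
      simp only [psi, nufun, hi0, hi1, if_false, if_true, hfun, if_neg (not_le.2 hz2)]
      ring
  by_cases htauM : tau ≤ M
  · -- middle case
    have hcM : Real.sqrt (lam0 * lam2) ≤ lam2 * M := by
      rw [hc]; nlinarith
    rcases le_or_gt z (2 * Real.sqrt (lam0 * lam2)) with hz2 | hz2
    · -- maximizer at 0, value 0; hfun z ≤ 0
      refine ⟨0, le_refl _, hM.le, fun h => absurd h hi0, ?_⟩
      have hh : hfun lam0 lam2 M z ≤ 0 := by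
        unfold hfun
        rw [if_pos (by linarith)]
        have h4 : (0:ℝ) < 4 * lam2 := by linarith
        rw [sub_nonpos, div_le_iff₀ h4]
        nlinarith [Real.sq_sqrt (by positivity : (0:ℝ) ≤ lam0 * lam2)]
      simp only [psi, nufun, hi0, hi1, htaudef, (show Real.sqrt (lam0 / lam2) ≤ M from htauM), if_false, if_true]
      rw [abs_zero, if_pos htau0, max_eq_right hh]
      ring
    · have hc2 : Real.sqrt (lam0 * lam2) ^ 2 = lam0 * lam2 :=
        Real.sq_sqrt (by positivity)
      rcases le_or_gt z (2 * M * lam2) with hzM | hzM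
      · -- maximizer at z/(2 lam2) > tau
        refine ⟨z / (2 * lam2), by positivity, ?_, fun h => absurd h hi0, ?_⟩
        · rw [div_le_iff₀ (by linarith)]; linarith
        · have hgt : ¬ (|z / (2 * lam2)| ≤ tau) := by
            rw [abs_of_nonneg (by positivity), not_le, lt_div_iff₀ (by linarith)]
            rw [hc] at hz2
            linarith
          have hh0 : 0 ≤ hfun lam0 lam2 M z := by
            unfold hfun
            rw [if_pos hzM, sub_nonneg, le_div_iff₀ (by linarith : (0:ℝ) < 4 * lam2)]
            nlinarith
          simp only [psi, nufun, hi0, hi1, htaudef, (show Real.sqrt (lam0 / lam2) ≤ M from htauM), if_false, if_true]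
          rw [if_neg hgt, max_eq_left hh0]
          unfold hfun
          rw [if_pos hzM]
          field_simp
          ring
      · -- maximizer at M
        refine ⟨M, hM.le, le_refl _, fun h => absurd h hi0, ?_⟩
        have hpsiM : psi lam0 lam2 M F0 F1 i M = lam0 + lam2 * M ^ 2 := by
          simp only [psi, hi0, hi1, htaudef, (show Real.sqrt (lam0 / lam2) ≤ M from htauM), if_false, if_true]
          rw [abs_of_nonneg hM.le]
          split_ifs with hMtau
          · have : M = tau := le_antisymm hMtau htauM
            rw [this, hc]
            nlinarith
          · rfl
        have hh0 : 0 ≤ hfun lam0 lam2 M z := by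
          unfold hfun
          rw [if_neg (not_le.2 hzM)]
          nlinarith
        simp only [nufun, hi0, hi1, htaudef, (show Real.sqrt (lam0 / lam2) ≤ M from htauM), if_false, if_true]
        rw [hpsiM, max_eq_left hh0]
        unfold hfun
        rw [if_neg (not_le.2 hzM)]
        ring
  · -- linear case
    have hMne : (M:ℝ) ≠ 0 := ne_of_gt hM
    rcases le_or_gt (M * z) (lam0 + lam2 * M ^ 2) with hzle | hzgt
    · refine ⟨0, le_refl _, hM.le, fun h => absurd h hi0, ?_⟩
      simp only [psi, nufun, hi0, hi1, htaudef, (show ¬ Real.sqrt (lam0 / lam2) ≤ M from htauM), if_false]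
      rw [abs_zero, max_eq_right (by linarith)]
      ring
    · refine ⟨M, hM.le, le_refl _, fun h => absurd h hi0, ?_⟩
      simp only [psi, nufun, hi0, hi1, htaudef, (show ¬ Real.sqrt (lam0 / lam2) ≤ M from htauM), if_false]
      rw [abs_of_nonneg hM.le, max_eq_left (by linarith)]
      field_simp
      ring

lemma fenchel_attain {p : ℕ} {lam0 lam2 M : ℝ} (hlam0 : 0 ≤ lam0) (hlam2 : 0 < lam2)
    (hM : 0 < M) (F0 F1 : Set (Fin p)) (i : Fin p) (x : ℝ) :
    ∃ t, |t| ≤ M ∧ (i ∈ F0 → t = 0) ∧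
      x * t - psi lam0 lam2 M F0 F1 i t = nufun lam0 lam2 M F0 F1 i |x| := by
  obtain ⟨u, hu0, huM, huF0, hval⟩ :=
    fenchel_attain_nonneg hlam0 hlam2 hM F0 F1 i |x| (abs_nonneg x)
  rcases le_or_gt 0 x with hx | hx
  · refine ⟨u, by rwa [abs_of_nonneg hu0], huF0, ?_⟩
    rw [abs_of_nonneg hx] at hval ⊢
    rw [psi_abs, abs_of_nonneg hu0]
    exact hval
  · refine ⟨-u, by rwa [abs_neg, abs_of_nonneg hu0], fun h => by rw [huF0 h, neg_zero], ?_⟩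
    have : x * (-u) = |x| * u := by rw [abs_of_neg hx]; ring
    rw [this, psi_abs, abs_neg, abs_of_nonneg hu0]
    exact hval

lemma psi_mid_rep {lam0 lam2 : ℝ} (hlam0 : 0 ≤ lam0) (hlam2 : 0 < lam2) (t : ℝ) :
    (if |t| ≤ Real.sqrt (lam0 / lam2) then 2 * Real.sqrt (lam0 * lam2) * |t|
      else lam0 + lam2 * t ^ 2)
      = 2 * Real.sqrt (lam0 * lam2) * |t|
        + lam2 * max (|t| - Real.sqrt (lam0 / lam2)) 0 ^ 2 := by
  obtain ⟨hc, htau2⟩ := sqrt_facts hlam0 hlam2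
  split_ifs with h
  · rw [max_eq_right (by linarith)]
    ring
  · push_neg at h
    rw [max_eq_left (by linarith)]
    have hsq : |t| ^ 2 = t ^ 2 := sq_abs t
    rw [hc]
    nlinarith [htau2, hsq]

lemma psi_convexOn {p : ℕ} {lam0 lam2 M : ℝ} (hlam0 : 0 ≤ lam0) (hlam2 : 0 < lam2)
    (hM : 0 < M) (F0 F1 : Set (Fin p)) (i : Fin p) :
    ConvexOn ℝ Set.univ (psi lam0 lam2 M F0 F1 i) := by
  have hquad : ConvexOn ℝ Set.univ (fun t : ℝ => lam0 + lam2 * t ^ 2) := by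
    refine ⟨convex_univ, fun a _ b _ s t hs ht hst => ?_⟩
    simp only [smul_eq_mul]
    have h1 : t = 1 - s := by linarith
    subst h1
    nlinarith [mul_nonneg (mul_nonneg hs ht) (sq_nonneg (a - b)), hlam2.le]
  by_cases hi0 : i ∈ F0
  · have : psi lam0 lam2 M F0 F1 i = fun _ => (0:ℝ) := by
      funext t; simp [psi, hi0]
    rw [this]; exact convexOn_const _ convex_univ
  by_cases hi1 : i ∈ F1
  · have : psi lam0 lam2 M F0 F1 i = fun t => lam0 + lam2 * t ^ 2 := by
      funext t; simp [psi, hi0, hi1]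
    rw [this]; exact hquad
  by_cases htauM : Real.sqrt (lam0 / lam2) ≤ M
  · have hrep : psi lam0 lam2 M F0 F1 i = fun t =>
        2 * Real.sqrt (lam0 * lam2) * |t|
          + lam2 * max (|t| - Real.sqrt (lam0 / lam2)) 0 ^ 2 := by
      funext t
      simp only [psi, hi0, hi1, htauM, if_false, if_true]
      exact psi_mid_rep hlam0 hlam2 t
    rw [hrep]
    set tau := Real.sqrt (lam0 / lam2)
    set c := Real.sqrt (lam0 * lam2) with hcdef
    have hcnn : 0 ≤ c := Real.sqrt_nonneg _
    refine ⟨convex_univ, fun a _ b _ s t hs ht hst => ?_⟩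
    simp only [smul_eq_mul]
    have habs : |s * a + t * b| ≤ s * |a| + t * |b| := by
      calc |s * a + t * b| ≤ |s * a| + |t * b| := abs_add_le _ _
        _ = s * |a| + t * |b| := by rw [abs_mul, abs_mul, abs_of_nonneg hs, abs_of_nonneg ht]
    have hma : |a| - tau ≤ max (|a| - tau) 0 := le_max_left _ _
    have hmb : |b| - tau ≤ max (|b| - tau) 0 := le_max_left _ _
    have hma0 : (0:ℝ) ≤ max (|a| - tau) 0 := le_max_right _ _
    have hmb0 : (0:ℝ) ≤ max (|b| - tau) 0 := le_max_right _ _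
    have hm : max (|s * a + t * b| - tau) 0 ≤ s * max (|a| - tau) 0 + t * max (|b| - tau) 0 := by
      apply max_le
      · have := mul_le_mul_of_nonneg_left hma hs
        have := mul_le_mul_of_nonneg_left hmb ht
        nlinarith
      · positivity
    have hmsq : max (|s * a + t * b| - tau) 0 ^ 2
        ≤ s * max (|a| - tau) 0 ^ 2 + t * max (|b| - tau) 0 ^ 2 := by
      have h1 : max (|s * a + t * b| - tau) 0 ^ 2
          ≤ (s * max (|a| - tau) 0 + t * max (|b| - tau) 0) ^ 2 := by
        apply pow_le_pow_left₀ (le_max_right _ _) hm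
      nlinarith [mul_nonneg (mul_nonneg hs ht) (sq_nonneg (max (|a| - tau) 0 - max (|b| - tau) 0))]
    have hc1 := mul_le_mul_of_nonneg_left habs (by linarith : (0:ℝ) ≤ 2 * c)
    have hc2 := mul_le_mul_of_nonneg_left hmsq hlam2.le
    nlinarith
  · have hrep : psi lam0 lam2 M F0 F1 i = fun t => (lam0 / M + lam2 * M) * |t| := by
      funext t; simp [psi, hi0, hi1, htauM]
    rw [hrep]
    have hcnn : 0 ≤ lam0 / M + lam2 * M := by positivity
    refine ⟨convex_univ, fun a _ b _ s t hs ht hst => ?_⟩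
    simp only [smul_eq_mul]
    have habs : |s * a + t * b| ≤ s * |a| + t * |b| := by
      calc |s * a + t * b| ≤ |s * a| + |t * b| := abs_add_le _ _
        _ = s * |a| + t * |b| := by rw [abs_mul, abs_mul, abs_of_nonneg hs, abs_of_nonneg ht]
    have := mul_le_mul_of_nonneg_left habs hcnn
    nlinarith

lemma psi_continuous {p : ℕ} {lam0 lam2 M : ℝ} (hlam0 : 0 ≤ lam0) (hlam2 : 0 < lam2)
    (hM : 0 < M) (F0 F1 : Set (Fin p)) (i : Fin p) :
    Continuous (psi lam0 lam2 M F0 F1 i) := by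
  by_cases hi0 : i ∈ F0
  · have : psi lam0 lam2 M F0 F1 i = fun _ => (0:ℝ) := by funext t; simp [psi, hi0]
    rw [this]; exact continuous_const
  by_cases hi1 : i ∈ F1
  · have : psi lam0 lam2 M F0 F1 i = fun t => lam0 + lam2 * t ^ 2 := by
      funext t; simp [psi, hi0, hi1]
    rw [this]; continuity
  by_cases htauM : Real.sqrt (lam0 / lam2) ≤ M
  · have hrep : psi lam0 lam2 M F0 F1 i = fun t =>
        2 * Real.sqrt (lam0 * lam2) * |t|
          + lam2 * max (|t| - Real.sqrt (lam0 / lam2)) 0 ^ 2 := by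
      funext t
      simp only [psi, hi0, hi1, htauM, if_false, if_true]
      exact psi_mid_rep hlam0 hlam2 t
    rw [hrep]
    exact (continuous_const.mul continuous_abs).add
      (continuous_const.mul (((continuous_abs.sub continuous_const).max continuous_const).pow 2))
  · have hrep : psi lam0 lam2 M F0 F1 i = fun t => (lam0 / M + lam2 * M) * |t| := by
      funext t; simp [psi, hi0, hi1, htauM]
    rw [hrep]
    exact continuous_const.mul continuous_abs

lemma sum_exchange {n p : ℕ} (X : Matrix (Fin n) (Fin p) ℝ) (ρ : Fin n → ℝ)
    (γ : Fin p → ℝ) :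
    ∑ i, (∑ j, X j i * ρ j) * γ i = ∑ j, (∑ i, X j i * γ i) * ρ j := by
  simp_rw [Finset.sum_mul]
  rw [Finset.sum_comm]
  apply Finset.sum_congr rfl; intros j _
  apply Finset.sum_congr rfl; intros i _
  ring

lemma weak_duality {n p : ℕ} (X : Matrix (Fin n) (Fin p) ℝ) (y : Fin n → ℝ)
    {lam0 lam2 M : ℝ} (hlam0 : 0 ≤ lam0) (hlam2 : 0 < lam2) (hM : 0 < M)
    (F0 F1 : Set (Fin p)) (γ : Fin p → ℝ) (hγ : γ ∈ feasC M F0) (ρ : Fin n → ℝ) :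
    dualD X y lam0 lam2 M F0 F1 ρ ≤ primalP X y lam0 lam2 M F0 F1 γ := by
  obtain ⟨hγM, hγ0⟩ := hγ
  have key : ∀ i : Fin p, (∑ j, X j i * ρ j) * γ i - psi lam0 lam2 M F0 F1 i (γ i)
      ≤ nufun lam0 lam2 M F0 F1 i |∑ j, X j i * ρ j| := fun i =>
    fenchel_ub hlam0 hlam2 hM F0 F1 i _ _ (hγM i) (hγ0 i)
  have hsum : ∑ i, ((∑ j, X j i * ρ j) * γ i - psi lam0 lam2 M F0 F1 i (γ i))
      ≤ ∑ i, nufun lam0 lam2 M F0 F1 i |∑ j, X j i * ρ j| :=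
    Finset.sum_le_sum fun i _ => key i
  rw [Finset.sum_sub_distrib] at hsum
  rw [sum_exchange] at hsum
  have hquad : ∑ j, (-(1/2) * ρ j ^ 2 + y j * ρ j - (∑ i, X j i * γ i) * ρ j)
      ≤ ∑ j, (1/2) * (y j - ∑ i, X j i * γ i) ^ 2 := by
    apply Finset.sum_le_sum
    intro j _
    nlinarith [sq_nonneg (y j - (∑ i, X j i * γ i) - ρ j)]
  simp only [Finset.sum_add_distrib, Finset.sum_sub_distrib, ← Finset.mul_sum] at hquad
  unfold dualD primalP
  linarith

lemma primalP_continuous {n p : ℕ} (X : Matrix (Fin n) (Fin p) ℝ) (y : Fin n → ℝ)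
    {lam0 lam2 M : ℝ} (hlam0 : 0 ≤ lam0) (hlam2 : 0 < lam2) (hM : 0 < M)
    (F0 F1 : Set (Fin p)) :
    Continuous (primalP X y lam0 lam2 M F0 F1) := by
  unfold primalP
  apply Continuous.add
  · apply continuous_const.mul
    apply continuous_finset_sum
    intro j _
    exact (continuous_const.sub
      (continuous_finset_sum _ fun i _ => continuous_const.mul (continuous_apply i))).pow 2
  · apply continuous_finset_sum
    intro i _
    exact (psi_continuous hlam0 hlam2 hM F0 F1 i).comp (continuous_apply i)

lemma exists_primal_min {n p : ℕ} (X : Matrix (Fin n) (Fin p) ℝ) (y : Fin n → ℝ)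
    {lam0 lam2 M : ℝ} (hlam0 : 0 ≤ lam0) (hlam2 : 0 < lam2) (hM : 0 < M)
    (F0 F1 : Set (Fin p)) :
    ∃ β ∈ feasC M F0, IsMinOn (primalP X y lam0 lam2 M F0 F1) (feasC M F0) β := by
  have hK : IsCompact (Set.pi Set.univ fun _ : Fin p => Set.Icc (-M) M) :=
    isCompact_univ_pi fun _ => isCompact_Icc
  have hclosed : IsClosed (feasC M F0 : Set (Fin p → ℝ)) := by
    have : (feasC M F0 : Set (Fin p → ℝ))
        = (⋂ i, {β : Fin p → ℝ | |β i| ≤ M}) ∩ ⋂ i, ⋂ (_ : i ∈ F0), {β | β i = 0} := by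
      ext β; simp [feasC, Set.mem_iInter]
    rw [this]
    apply IsClosed.inter
    · exact isClosed_iInter fun i =>
        isClosed_le (continuous_abs.comp (continuous_apply i)) continuous_const
    · exact isClosed_iInter fun i => isClosed_iInter fun _ =>
        isClosed_eq (continuous_apply i) continuous_const
  have hsub : feasC M F0 ⊆ Set.pi Set.univ fun _ : Fin p => Set.Icc (-M) M := by
    intro β hβ i _
    exact abs_le.1 (hβ.1 i)
  have hcomp : IsCompact (feasC M F0 : Set (Fin p → ℝ)) :=
    hK.of_isClosed_subset hclosed hsub
  have hne : (feasC M F0 : Set (Fin p → ℝ)).Nonempty := by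
    refine ⟨0, fun i => ?_, fun i _ => rfl⟩
    simp [hM.le]
  exact hcomp.exists_isMinOn hne
    (primalP_continuous X y hlam0 hlam2 hM F0 F1).continuousOn

lemma coordinate_perturb {n p : ℕ} (X : Matrix (Fin n) (Fin p) ℝ) (y : Fin n → ℝ)
    {lam0 lam2 M : ℝ} (hlam0 : 0 ≤ lam0) (hlam2 : 0 < lam2) (hM : 0 < M)
    (F0 F1 : Set (Fin p)) {β : Fin p → ℝ} (hβ : β ∈ feasC M F0)
    (hmin : IsMinOn (primalP X y lam0 lam2 M F0 F1) (feasC M F0) β)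
    (i : Fin p) (hi0 : i ∉ F0) (t : ℝ) (ht : |t| ≤ M) :
    (t - β i) * (∑ j, X j i * (y j - ∑ k, X j k * β k))
        - (1/2) * (t - β i)^2 * (∑ j, (X j i)^2)
      ≤ psi lam0 lam2 M F0 F1 i t - psi lam0 lam2 M F0 F1 i (β i) := by
  set γ := Function.update β i t with hγdef
  have hγmem : γ ∈ feasC M F0 := by
    constructor
    · intro k
      by_cases hk : k = i
      · subst hk; simpa [hγdef] using ht
      · simpa [hγdef, Function.update_of_ne hk] using hβ.1 k
    · intro k hk
      have hki : k ≠ i := fun h => hi0 (h ▸ hk)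
      simpa [hγdef, Function.update_of_ne hki] using hβ.2 k hk
  have hP : primalP X y lam0 lam2 M F0 F1 β ≤ primalP X y lam0 lam2 M F0 F1 γ := hmin hγmem
  set Δ := t - β i with hΔ
  have hsum : ∀ j, ∑ k, X j k * γ k = (∑ k, X j k * β k) + X j i * Δ := by
    intro j
    rw [Finset.sum_eq_sum_sdiff_singleton_add (Finset.mem_univ i) (fun k => X j k * γ k),
      Finset.sum_eq_sum_sdiff_singleton_add (Finset.mem_univ i) (fun k => X j k * β k)]
    have hdiff : ∑ k ∈ Finset.univ \ {i}, X j k * γ k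
        = ∑ k ∈ Finset.univ \ {i}, X j k * β k := by
      apply Finset.sum_congr rfl
      intro k hk
      have hki : k ≠ i := by simpa using (Finset.mem_sdiff.1 hk).2
      rw [hγdef, Function.update_of_ne hki]
    rw [hdiff, hγdef]
    simp only [Function.update_self]
    ring
  have hpen : ∑ k, psi lam0 lam2 M F0 F1 k (γ k)
      = ∑ k, psi lam0 lam2 M F0 F1 k (β k)
        - psi lam0 lam2 M F0 F1 i (β i) + psi lam0 lam2 M F0 F1 i t := by
    rw [Finset.sum_eq_sum_sdiff_singleton_add (Finset.mem_univ i)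
        (fun k => psi lam0 lam2 M F0 F1 k (γ k)),
      Finset.sum_eq_sum_sdiff_singleton_add (Finset.mem_univ i)
        (fun k => psi lam0 lam2 M F0 F1 k (β k))]
    have hdiff : ∑ k ∈ Finset.univ \ {i}, psi lam0 lam2 M F0 F1 k (γ k)
        = ∑ k ∈ Finset.univ \ {i}, psi lam0 lam2 M F0 F1 k (β k) := by
      apply Finset.sum_congr rfl
      intro k hk
      have hki : k ≠ i := by simpa using (Finset.mem_sdiff.1 hk).2
      rw [hγdef, Function.update_of_ne hki]
    rw [hdiff, hγdef]
    simp only [Function.update_self]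
    ring
  have hquad : ∑ j, (y j - ∑ k, X j k * γ k) ^ 2
      = ∑ j, (y j - ∑ k, X j k * β k) ^ 2
        - 2 * Δ * ∑ j, X j i * (y j - ∑ k, X j k * β k)
        + Δ^2 * ∑ j, (X j i)^2 := by
    have h1 : ∀ j, (y j - ∑ k, X j k * γ k) ^ 2
        = (y j - ∑ k, X j k * β k) ^ 2
          - 2 * Δ * (X j i * (y j - ∑ k, X j k * β k)) + Δ^2 * (X j i)^2 := by
      intro j
      rw [hsum j]
      ring
    rw [Finset.sum_congr rfl fun j _ => h1 j]
    rw [Finset.sum_add_distrib, Finset.sum_sub_distrib, ← Finset.mul_sum, ← Finset.mul_sum]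
  unfold primalP at hP
  rw [hpen, hquad] at hP
  linarith

set_option maxHeartbeats 1000000 in
lemma coordinate_opt {n p : ℕ} (X : Matrix (Fin n) (Fin p) ℝ) (y : Fin n → ℝ)
    {lam0 lam2 M : ℝ} (hlam0 : 0 ≤ lam0) (hlam2 : 0 < lam2) (hM : 0 < M)
    (F0 F1 : Set (Fin p)) {β : Fin p → ℝ} (hβ : β ∈ feasC M F0)
    (hmin : IsMinOn (primalP X y lam0 lam2 M F0 F1) (feasC M F0) β)
    (i : Fin p) (hi0 : i ∉ F0) (t : ℝ) (ht : |t| ≤ M) :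
    (t - β i) * (∑ j, X j i * (y j - ∑ k, X j k * β k))
      ≤ psi lam0 lam2 M F0 F1 i t - psi lam0 lam2 M F0 F1 i (β i) := by
  set x := ∑ j, X j i * (y j - ∑ k, X j k * β k) with hx
  set q := ∑ j, (X j i)^2 with hq
  have hq0 : 0 ≤ q := Finset.sum_nonneg fun j _ => sq_nonneg _
  set b := β i with hb
  set Δ := t - b with hΔ
  set K := (1/2) * Δ^2 * q with hK
  have hK0 : 0 ≤ K := by positivity
  apply le_of_forall_pos_le_add
  intro ε hε
  set s := min 1 (ε / (K + 1)) with hs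
  have hs0 : 0 < s := lt_min one_pos (div_pos hε (by linarith))
  have hs1 : s ≤ 1 := min_le_left _ _
  have hsε : s ≤ ε / (K + 1) := min_le_right _ _
  set ts := b + s * Δ with hts
  have htsM : |ts| ≤ M := by
    have h1 : ts = (1 - s) * b + s * t := by rw [hts, hΔ]; ring
    rw [h1]
    calc |(1 - s) * b + s * t| ≤ |(1 - s) * b| + |s * t| := abs_add_le _ _
      _ = (1 - s) * |b| + s * |t| := by
          rw [abs_mul, abs_mul, abs_of_nonneg (by linarith), abs_of_nonneg hs0.le]
      _ ≤ (1 - s) * M + s * M := by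
          have hbM : |b| ≤ M := hβ.1 i
          have h2 := mul_le_mul_of_nonneg_left hbM (by linarith : (0:ℝ) ≤ 1 - s)
          have h3 := mul_le_mul_of_nonneg_left ht hs0.le
          linarith
      _ = M := by ring
  have hpert := coordinate_perturb X y hlam0 hlam2 hM F0 F1 hβ hmin i hi0 ts htsM
  rw [← hx, ← hq, ← hb] at hpert
  have hts_b : ts - b = s * Δ := by rw [hts]; ring
  rw [hts_b] at hpert
  have hconv := (psi_convexOn hlam0 hlam2 hM F0 F1 i).2 (Set.mem_univ b) (Set.mem_univ t)
    (by linarith : (0:ℝ) ≤ 1 - s) hs0.le (by ring : (1 - s) + s = 1)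
  simp only [smul_eq_mul] at hconv
  have htseq : ts = (1 - s) * b + s * t := by rw [hts, hΔ]; ring
  rw [← htseq] at hconv
  -- hpert : s*Δ*x - (1/2)*(s*Δ)^2*q ≤ psi ts - psi b
  -- hconv : psi ts ≤ (1-s) psi b + s psi t
  have hcomb : s * Δ * x - (1/2) * (s*Δ)^2 * q
      ≤ s * (psi lam0 lam2 M F0 F1 i t - psi lam0 lam2 M F0 F1 i b) := by nlinarith
  have hdiv : Δ * x - (1/2) * s * Δ^2 * q
      ≤ psi lam0 lam2 M F0 F1 i t - psi lam0 lam2 M F0 F1 i b := by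
    have h2 : s * (Δ * x - (1/2) * s * Δ^2 * q)
        ≤ s * (psi lam0 lam2 M F0 F1 i t - psi lam0 lam2 M F0 F1 i b) := by nlinarith
    exact le_of_mul_le_mul_left h2 hs0
  have hsK : (1/2) * s * Δ^2 * q ≤ ε := by
    have h1 : (1/2) * s * Δ^2 * q = s * K := by rw [hK]; ring
    rw [h1]
    calc s * K ≤ (ε / (K + 1)) * K := mul_le_mul_of_nonneg_right hsε hK0
      _ ≤ ε := by
          rw [div_mul_eq_mul_div, div_le_iff₀ (by linarith : (0:ℝ) < K + 1)]
          nlinarith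
  clear_value x q b Δ K s ts
  linarith


lemma coordinate_eq {n p : ℕ} (X : Matrix (Fin n) (Fin p) ℝ) (y : Fin n → ℝ)
    {lam0 lam2 M : ℝ} (hlam0 : 0 ≤ lam0) (hlam2 : 0 < lam2) (hM : 0 < M)
    (F0 F1 : Set (Fin p)) {β : Fin p → ℝ} (hβ : β ∈ feasC M F0)
    (hmin : IsMinOn (primalP X y lam0 lam2 M F0 F1) (feasC M F0) β)
    (i : Fin p) :
    nufun lam0 lam2 M F0 F1 i |∑ j, X j i * (y j - ∑ k, X j k * β k)|
      = (∑ j, X j i * (y j - ∑ k, X j k * β k)) * β i - psi lam0 lam2 M F0 F1 i (β i) := by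
  set x := ∑ j, X j i * (y j - ∑ k, X j k * β k) with hx
  by_cases hi0 : i ∈ F0
  · simp [nufun, psi, hi0, hβ.2 i hi0]
  obtain ⟨ts, htsM, _, htval⟩ := fenchel_attain hlam0 hlam2 hM F0 F1 i x
  have h1 := coordinate_opt X y hlam0 hlam2 hM F0 F1 hβ hmin i hi0 ts htsM
  rw [← hx] at h1
  have h2 := fenchel_ub hlam0 hlam2 hM F0 F1 i x (β i) (hβ.1 i) (fun h => absurd h hi0)
  linarith

/-- Strong duality for the node relaxation: the infimum of `P(β)` over the primal
feasible set `C` equals the supremum of `D(r)` over `r ∈ ℝⁿ`. -/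
theorem strong_duality_node_relaxation {n p : ℕ} (X : Matrix (Fin n) (Fin p) ℝ)
    (y : Fin n → ℝ) (lam0 lam2 M : ℝ) (hlam0 : 0 ≤ lam0) (hlam2 : 0 < lam2) (hM : 0 < M)
    (F0 F1 : Set (Fin p)) (hdisj : Disjoint F0 F1) :
    sInf (primalP X y lam0 lam2 M F0 F1 '' feasC M F0)
      = sSup (Set.range (dualD X y lam0 lam2 M F0 F1)) := by
  obtain ⟨β, hβC, hβmin⟩ := exists_primal_min X y hlam0 hlam2 hM F0 F1
  set r : Fin n → ℝ := fun j => y j - ∑ k, X j k * β k with hrdef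
  have heq : primalP X y lam0 lam2 M F0 F1 β = dualD X y lam0 lam2 M F0 F1 r := by
    have hnu : ∑ i, nufun lam0 lam2 M F0 F1 i |∑ j, X j i * r j|
        = ∑ i, ((∑ j, X j i * r j) * β i - psi lam0 lam2 M F0 F1 i (β i)) := by
      apply Finset.sum_congr rfl
      intro i _
      exact coordinate_eq X y hlam0 hlam2 hM F0 F1 hβC hβmin i
    have hex : ∑ i, (∑ j, X j i * r j) * β i = ∑ j, (∑ i, X j i * β i) * r j :=
      sum_exchange X r β
    have hyr : ∑ j, y j * r j - ∑ j, (∑ i, X j i * β i) * r j = ∑ j, r j ^ 2 := by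
      rw [← Finset.sum_sub_distrib]
      apply Finset.sum_congr rfl
      intro j _
      have : r j = y j - ∑ k, X j k * β k := rfl
      rw [this]; ring
    have hsq : ∀ j, (y j - ∑ i, X j i * β i) ^ 2 = r j ^ 2 := fun j => rfl
    unfold primalP dualD
    rw [hnu, Finset.sum_sub_distrib, hex]
    simp only [hsq]
    linarith [hyr]
  have hSne : (primalP X y lam0 lam2 M F0 F1 '' feasC M F0).Nonempty :=
    ⟨_, β, hβC, rfl⟩
  have hTne : (Set.range (dualD X y lam0 lam2 M F0 F1)).Nonempty := ⟨_, r, rfl⟩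
  have hbddS : BddBelow (primalP X y lam0 lam2 M F0 F1 '' feasC M F0) := by
    refine ⟨dualD X y lam0 lam2 M F0 F1 r, ?_⟩
    rintro s ⟨γ, hγ, rfl⟩
    exact weak_duality X y hlam0 hlam2 hM F0 F1 γ hγ r
  have hbddT : BddAbove (Set.range (dualD X y lam0 lam2 M F0 F1)) := by
    refine ⟨primalP X y lam0 lam2 M F0 F1 β, ?_⟩
    rintro d ⟨ρ, rfl⟩
    exact weak_duality X y hlam0 hlam2 hM F0 F1 β hβC ρ
  apply le_antisymm
  · calc sInf (primalP X y lam0 lam2 M F0 F1 '' feasC M F0)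
        ≤ primalP X y lam0 lam2 M F0 F1 β := csInf_le hbddS ⟨β, hβC, rfl⟩
      _ = dualD X y lam0 lam2 M F0 F1 r := heq
      _ ≤ sSup (Set.range (dualD X y lam0 lam2 M F0 F1)) := le_csSup hbddT ⟨r, rfl⟩
  · apply csSup_le hTne
    rintro d ⟨ρ, rfl⟩
    apply le_csInf hSne
    rintro s ⟨γ, hγ, rfl⟩
    exact weak_duality X y hlam0 hlam2 hM F0 F1 γ hγ ρ
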